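/- Let q be a prime power, θ a generator of F_{q^2}^*, and A = { a ∈ Z/(q^2−1)Z : θ^a − θ ∈ F_q }. Then the difference set A − A equals Z/(q^2−1)Z minus the set { s(q+1) : 1 ≤ s ≤ q−2 }. -/

import Mathlib

/-- The difference set of the Bose–Chowla set misses exactly the multiples
s(q+1), 1 ≤ s ≤ q-2. -/
theorem stmt_3 (q : ℕ) (hq : ∃ p n : ℕ, p.Prime ∧ 0 < n ∧ q = p ^ n)
    {K : Type*} [Field K] (hK : Nat.card K = q ^ 2)
    (F : Subfield K) (hF : Nat.card F = q)
    (θ : Kˣ) (hθ : ∀ x : Kˣ, x ∈ Subgroup.zpowers θ)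
    (A : Set (ZMod (q ^ 2 - 1)))
    (hA : A = {a : ZMod (q ^ 2 - 1) | ((θ : K) ^ a.val - (θ : K)) ∈ F}) :
    {x : ZMod (q ^ 2 - 1) | ∃ a ∈ A, ∃ b ∈ A, x = a - b}
      = Set.univ \ {x : ZMod (q ^ 2 - 1) |
          ∃ s : ℕ, 1 ≤ s ∧ s ≤ q - 2 ∧ x = ((s * (q + 1) : ℕ) : ZMod (q ^ 2 - 1))} := by
  subst hA
  -- basic numerics
  have hq2 : 2 ≤ q := by
    obtain ⟨p, n, hp, hn, rfl⟩ := hq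
    exact Nat.one_lt_pow (by omega) hp.one_lt
  have hqq : q * q = q ^ 2 := by ring
  have h2q : 2 * q ≤ q * q := Nat.mul_le_mul_right q hq2
  have hN3 : 3 ≤ q ^ 2 - 1 := by omega
  have hfact : q ^ 2 - 1 = (q + 1) * (q - 1) := by
    obtain ⟨r, rfl⟩ : ∃ r, q = r + 2 := ⟨q - 2, by omega⟩
    have h1 : (r + 2) ^ 2 = r ^ 2 + 4 * r + 4 := by ring
    have h2 : (r + 2 + 1) * (r + 2 - 1) = r ^ 2 + 4 * r + 3 := by
      have : r + 2 - 1 = r + 1 := by omega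
      rw [this]; ring
    omega
  haveI : NeZero (q ^ 2 - 1) := ⟨by omega⟩
  haveI : Fact (1 < q ^ 2 - 1) := ⟨by omega⟩
  -- finiteness and cardinalities
  haveI : Finite K := Nat.finite_of_card_ne_zero (by rw [hK]; positivity)
  haveI : Fintype K := Fintype.ofFinite K
  haveI : DecidableEq K := Classical.decEq K
  have hcardK : Fintype.card K = q ^ 2 := by rw [← Nat.card_eq_fintype_card, hK]
  haveI : Fintype F := Fintype.ofFinite F
  have hcardF : Fintype.card F = q := by rw [← Nat.card_eq_fintype_card, hF]
  have horder : orderOf θ = q ^ 2 - 1 := by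
    rw [orderOf_eq_card_of_forall_mem_zpowers hθ, Nat.card_eq_fintype_card,
      Fintype.card_units, hcardK]
  -- θ^(q²-1) = 1 in K
  have hθN : (θ : K) ^ (q ^ 2 - 1) = 1 := by
    have h := pow_orderOf_eq_one θ
    rw [horder] at h
    have := congrArg (Units.val) h
    push_cast at this
    exact this
  -- order divides
  have hdvd_of : ∀ t : ℕ, (θ : K) ^ t = 1 → (q ^ 2 - 1) ∣ t := by
    intro t ht
    rw [← horder]
    refine orderOf_dvd_of_pow_eq_one (Units.ext ?_)
    push_cast
    exact ht
  -- power modulo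
  have hpowmod : ∀ m : ℕ, (θ : K) ^ (m % (q ^ 2 - 1)) = (θ : K) ^ m := by
    intro m
    conv_rhs => rw [← Nat.div_add_mod m (q ^ 2 - 1)]
    rw [pow_add, pow_mul, hθN, one_pow, one_mul]
  have hvadd : ∀ a b : ZMod (q ^ 2 - 1),
      (θ : K) ^ (a + b).val = (θ : K) ^ a.val * (θ : K) ^ b.val := by
    intro a b
    rw [ZMod.val_add, hpowmod, pow_add]
  -- discrete log
  have hlog : ∀ z : K, z ≠ 0 → ∃ a : ZMod (q ^ 2 - 1), (θ : K) ^ a.val = z := by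
    intro z hz
    obtain ⟨u, hu⟩ := Ne.isUnit hz
    obtain ⟨m, hm⟩ := mem_powers_iff_mem_zpowers.mpr (hθ u)
    refine ⟨(m : ZMod (q ^ 2 - 1)), ?_⟩
    rw [ZMod.val_natCast, hpowmod]
    rw [← hu, ← hm]
    push_cast
    rfl
  -- elements of F satisfy x^(q-1) = 1
  have hFpow : ∀ z : K, z ∈ F → z ≠ 0 → z ^ (q - 1) = 1 := by
    intro z hzF hz
    have h : (⟨z, hzF⟩ : F) ^ (q - 1) = 1 := by
      have h2 := FiniteField.pow_card_sub_one_eq_one (⟨z, hzF⟩ : F)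
        (fun h0 => hz (by simpa using congrArg Subtype.val h0))
      rwa [hcardF] at h2
    have h3 := congrArg (fun x : F => (x : K)) h
    push_cast at h3
    exact h3
  -- conversely, (q-1)-th roots of unity lie in F
  have hFmem : ∀ z : K, z ≠ 0 → z ^ (q - 1) = 1 → z ∈ F := by
    intro z hz h1
    by_contra hzF
    set S := (Polynomial.nthRoots (q - 1) (1 : K)).toFinset with hS
    have hScard : S.card ≤ q - 1 :=
      le_trans (Multiset.toFinset_card_le _) (Polynomial.card_nthRoots (q - 1) (1 : K))
    set Tf := (Finset.univ : Finset F).image (fun a : F => (a : K)) with hTf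
    have hTfcard : Tf.card = q := by
      rw [hTf, Finset.card_image_of_injective _ Subtype.val_injective,
        Finset.card_univ, hcardF]
    have h0Tf : (0 : K) ∈ Tf := Finset.mem_image.mpr ⟨0, Finset.mem_univ _, by simp⟩
    have hins : insert z (Tf.erase 0) ⊆ S := by
      intro w hw
      rcases Finset.mem_insert.mp hw with rfl | hw
      · rw [hS, Multiset.mem_toFinset, Polynomial.mem_nthRoots (by omega : 0 < q - 1)]
        exact h1
      · obtain ⟨hw0, hwT⟩ := Finset.mem_erase.mp hw
        obtain ⟨a, _, rfl⟩ := Finset.mem_image.mp hwT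
        rw [hS, Multiset.mem_toFinset, Polynomial.mem_nthRoots (by omega : 0 < q - 1)]
        exact hFpow _ a.2 hw0
    have hznT : z ∉ Tf.erase 0 := by
      intro h
      obtain ⟨a, _, ha⟩ := Finset.mem_image.mp (Finset.mem_of_mem_erase h)
      exact hzF (ha ▸ a.2)
    have hcardins : (insert z (Tf.erase 0)).card = q := by
      rw [Finset.card_insert_of_notMem hznT, Finset.card_erase_of_mem h0Tf, hTfcard]
      omega
    have := Finset.card_le_card hins
    omega
  -- θ ∉ F
  have hθF : (θ : K) ∉ F := by
    intro h
    have h1 := hFpow _ h (Units.ne_zero θ)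
    have hd := hdvd_of _ h1
    have := Nat.le_of_dvd (by omega) hd
    omega
  -- linear independence of 1, θ over F
  have hindep : ∀ c d : K, c ∈ F → d ∈ F → c + d * θ = 0 → c = 0 ∧ d = 0 := by
    intro c d hc hd h
    by_cases hd0 : d = 0
    · subst hd0
      simp only [zero_mul, add_zero] at h
      exact ⟨h, rfl⟩
    · exfalso
      apply hθF
      have hθeq : (θ : K) = -c / d := by
        rw [eq_div_iff hd0]
        linear_combination h
      rw [hθeq]
      exact F.div_mem (F.neg_mem hc) hd
  -- membership criterion: θ^m ∈ F ↔ (q+1) ∣ m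
  have hcrit : ∀ m : ℕ, ((θ : K) ^ m ∈ F ↔ (q + 1) ∣ m) := by
    intro m
    constructor
    · intro h
      have h1 := hFpow _ h (pow_ne_zero _ (Units.ne_zero θ))
      rw [← pow_mul] at h1
      have hd := hdvd_of _ h1
      rw [hfact] at hd
      exact (Nat.mul_dvd_mul_iff_right (show 0 < q - 1 by omega)).mp hd
    · rintro ⟨k, rfl⟩
      rw [pow_mul]
      apply F.pow_mem
      apply hFmem _ (pow_ne_zero _ (Units.ne_zero θ))
      rw [← pow_mul, ← hfact]
      exact hθN
  -- every element of K is α + β θ with α, β ∈ F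
  have hbasis : ∀ z : K, ∃ α β : K, α ∈ F ∧ β ∈ F ∧ z = α + β * θ := by
    have hinj : Function.Injective
        (fun ab : F × F => (ab.1 : K) + (ab.2 : K) * θ) := by
      rintro ⟨a, b⟩ ⟨c, d⟩ h
      simp only at h
      have h2 : ((a : K) - c) + ((b : K) - d) * θ = 0 := by linear_combination h
      obtain ⟨h3, h4⟩ := hindep _ _ (F.sub_mem a.2 c.2) (F.sub_mem b.2 d.2) h2
      have ha : (a : K) = c := sub_eq_zero.mp h3
      have hb : (b : K) = d := sub_eq_zero.mp h4
      exact Prod.ext (Subtype.ext ha) (Subtype.ext hb)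
    have hsurj : Function.Surjective
        (fun ab : F × F => (ab.1 : K) + (ab.2 : K) * θ) := by
      have hb := (Fintype.bijective_iff_injective_and_card _).mpr
        ⟨hinj, by rw [Fintype.card_prod, hcardF, hcardK]; ring⟩
      exact hb.2
    intro z
    obtain ⟨⟨a, b⟩, hab⟩ := hsurj z
    exact ⟨a, b, a.2, b.2, hab.symm⟩
  -- main proof
  ext x
  simp only [Set.mem_setOf_eq, Set.mem_diff, Set.mem_univ, true_and]
  constructor
  · rintro ⟨a, ha, b, hb, rfl⟩
    rintro ⟨s, hs1, hs2, hx⟩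
    have hslt : s * (q + 1) < q ^ 2 - 1 := by
      have h1 : s * (q + 1) ≤ (q - 2) * (q + 1) := Nat.mul_le_mul_right _ hs2
      have h2 : (q - 2) * (q + 1) + (q + 1) = (q - 1) * (q + 1) := by
        have : q - 2 + 1 = q - 1 := by omega
        calc (q - 2) * (q + 1) + (q + 1) = (q - 2 + 1) * (q + 1) := by ring
          _ = (q - 1) * (q + 1) := by rw [this]
      have h3 : (q - 1) * (q + 1) = q ^ 2 - 1 := by rw [hfact]; ring
      omega
    have hval : (a - b).val = s * (q + 1) := by
      rw [hx, ZMod.val_cast_of_lt hslt]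
    have key : (θ : K) ^ a.val = (θ : K) ^ ((a - b).val) * (θ : K) ^ b.val := by
      conv_lhs => rw [show a = (a - b) + b by ring]
      rw [hvadd]
    set u := (θ : K) ^ ((a - b).val) with hu
    have huF : u ∈ F := by
      rw [hu, hval]
      exact (hcrit _).mpr ⟨s, by ring⟩
    have heq : (u * ((θ : K) ^ b.val - θ) - ((θ : K) ^ a.val - θ)) + (u - 1) * θ = 0 := by
      linear_combination -key
    obtain ⟨h1, h2⟩ := hindep _ _
      (F.sub_mem (F.mul_mem huF hb) ha) (F.sub_mem huF F.one_mem) heq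
    have hu1 : u = 1 := by rwa [sub_eq_zero] at h2
    have hdvd := hdvd_of _ hu1
    have h0 := Nat.eq_zero_of_dvd_of_lt hdvd (by rw [hval]; exact hslt)
    rw [hval] at h0
    have : 0 < s * (q + 1) := Nat.mul_pos (by omega) (by omega)
    omega
  · intro hmiss
    by_cases hdvd : (q + 1) ∣ x.val
    · obtain ⟨s, hs⟩ := hdvd
      have hxval : x.val < q ^ 2 - 1 := ZMod.val_lt x
      have hs2 : s ≤ q - 2 := by
        by_contra hc
        push_neg at hc
        have h4 : (q + 1) * (q - 1) ≤ (q + 1) * s :=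
          Nat.mul_le_mul_left (q + 1) (by omega)
        have h3 : (q + 1) * (q - 1) = q ^ 2 - 1 := hfact.symm
        omega
      rcases Nat.eq_zero_or_pos s with rfl | hs0
      · have hx0 : x = 0 := by
          have : x.val = 0 := by omega
          exact (ZMod.val_eq_zero x).mp this
        refine ⟨1, ?_, 1, ?_, by rw [hx0]; ring⟩ <;>
        · simp only [Set.mem_setOf_eq, ZMod.val_one, pow_one, sub_self]
          exact F.zero_mem
      · exfalso
        apply hmiss
        refine ⟨s, hs0, hs2, ?_⟩
        have hx : ((x.val : ℕ) : ZMod (q ^ 2 - 1)) = x := ZMod.natCast_rightInverse x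
        rw [← hx, hs, mul_comm]
    · set u := (θ : K) ^ x.val with hu
      have huF : u ∉ F := fun h => hdvd ((hcrit _).mp h)
      obtain ⟨α, β, hα, hβ, hαβ⟩ := hbasis (u * θ)
      obtain ⟨γ, δ, hγ, hδ, hγδ⟩ := hbasis u
      have hδ0 : δ ≠ 0 := by
        rintro rfl
        apply huF
        rw [hγδ]
        simpa using hγ
      set d := (1 - β) / δ with hd
      have hdF : d ∈ F := F.div_mem (F.sub_mem F.one_mem hβ) hδ
      have hβd : β + d * δ = 1 := by
        rw [hd]
        field_simp
        ring
      have hkey : u * ((θ : K) + d) = (θ : K) + (α + d * γ) := by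
        have e1 : u * ((θ : K) + d) = u * θ + d * u := by ring
        rw [e1, hαβ, hγδ]
        linear_combination (θ : K) * hβd
      have hθd0 : (θ : K) + d ≠ 0 := by
        intro h
        apply hθF
        have : (θ : K) = -d := by linear_combination h
        rw [this]
        exact F.neg_mem hdF
      obtain ⟨b, hbval⟩ := hlog _ hθd0
      refine ⟨x + b, ?_, b, ?_, by ring⟩
      · show ((θ : K) ^ (x + b).val - (θ : K)) ∈ F
        rw [hvadd, hbval, ← hu, hkey]
        have : (θ : K) + (α + d * γ) - θ = α + d * γ := by ring
        rw [this]
        exact F.add_mem hα (F.mul_mem hdF hγ)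
      · show ((θ : K) ^ b.val - (θ : K)) ∈ F
        rw [hbval]
        have : (θ : K) + d - θ = d := by ring
        rw [this]
        exact hdF
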